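/- Let t ≥ 2 and let k_1 < k_2 < ... < k_t be natural numbers with 1 ≤ k_1, gcd(k_1, ..., k_t) = 1, and at least one k_i even. Then any real sequence a : ℕ → ℝ satisfying a(n) = 1 - (1/t)·∑_{i=1}^{t} a(n - k_i) for all n ≥ k_t converges to 1/2 as n → ∞. -/

import Mathlib

open Filter

/-- Path expansion bound: following a list `l` of moves, `b n` is close to
`(-1)^|l| (1/t)^|l| b (n - sum)` up to `(1 - (1/t)^|l|) M`. -/
lemma stmt12_expand (t : ℕ) (ht : 2 ≤ t) (k : ℕ → ℕ) (b : ℕ → ℝ)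
    (hk : ∀ i ∈ Finset.Icc 1 t, 1 ≤ k i ∧ k i ≤ k t)
    (hrec : ∀ n, k t ≤ n → b n = -(1 / (t : ℝ)) * ∑ i ∈ Finset.Icc 1 t, b (n - k i)) :
    ∀ (l : List ℕ), (∀ i ∈ l, i ∈ Finset.Icc 1 t) → ∀ n, l.length * k t ≤ n →
    ∀ M : ℝ, 0 ≤ M → (∀ j, n - l.length * k t ≤ j → j < n → |b j| ≤ M) →
    |b n - (-1 : ℝ) ^ l.length * (1 / (t : ℝ)) ^ l.length * b (n - (l.map k).sum)|
      ≤ (1 - (1 / (t : ℝ)) ^ l.length) * M := by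
  have ht0 : (t : ℝ) ≠ 0 := by positivity
  intro l
  induction l with
  | nil =>
    intro _ n _ M hM _
    simp
  | cons i l IH =>
    intro hl n hn M hM hb
    have hi : i ∈ Finset.Icc 1 t := hl i (List.mem_cons_self)
    have hki := hk i hi
    set m := l.length with hm
    set K := k t with hK
    have hK1 : 1 ≤ K := le_trans hki.1 hki.2
    have hlen : (i :: l).length = m + 1 := by simp [hm]
    rw [hlen] at hn hb
    have heq : (m + 1) * K = m * K + K := by ring
    have hn' : m * K ≤ n - k i := by omega
    have hnK : K ≤ n := by omega
    have hbn := hrec n hnK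
    set s := (l.map k).sum with hs
    have hsub : n - k i - s = n - (k i + s) := by omega
    -- IH at n - k i
    have hIH := IH (fun j hj => hl j (List.mem_cons_of_mem i hj)) (n - k i) hn' M hM
      (fun j hj1 hj2 => hb j (by omega) (by omega))
    rw [hsub] at hIH
    -- bound on the other terms
    have herase : ∀ j ∈ (Finset.Icc 1 t).erase i, |b (n - k j)| ≤ M := by
      intro j hj
      have hj' := Finset.mem_of_mem_erase hj
      have h2 := hk j hj'
      exact hb (n - k j) (by omega) (by omega)
    have hcard : ((Finset.Icc 1 t).erase i).card = t - 1 := by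
      rw [Finset.card_erase_of_mem hi, Nat.card_Icc]; omega
    have hsum_erase : |∑ j ∈ (Finset.Icc 1 t).erase i, b (n - k j)| ≤ ((t : ℝ) - 1) * M := by
      calc |∑ j ∈ (Finset.Icc 1 t).erase i, b (n - k j)|
          ≤ ∑ j ∈ (Finset.Icc 1 t).erase i, |b (n - k j)| := Finset.abs_sum_le_sum_abs _ _
        _ ≤ ∑ j ∈ (Finset.Icc 1 t).erase i, M := Finset.sum_le_sum herase
        _ = ((t : ℝ) - 1) * M := by
            rw [Finset.sum_const, hcard, nsmul_eq_mul]
            congr 1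
            push_cast [Nat.cast_sub (by omega : 1 ≤ t)]
            ring
    -- split the sum
    have hsplit : ∑ j ∈ Finset.Icc 1 t, b (n - k j)
        = b (n - k i) + ∑ j ∈ (Finset.Icc 1 t).erase i, b (n - k j) :=
      (Finset.add_sum_erase _ _ hi).symm
    have hmap : ((i :: l).map k).sum = k i + s := by simp [hs]
    rw [hlen, hmap, hbn, hsplit]
    have key : -(1 / (t:ℝ)) * (b (n - k i) + ∑ j ∈ (Finset.Icc 1 t).erase i, b (n - k j))
        - (-1 : ℝ) ^ (m + 1) * (1 / (t:ℝ)) ^ (m + 1) * b (n - (k i + s))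
        = -(1 / (t:ℝ)) * ((b (n - k i) - (-1 : ℝ) ^ m * (1 / (t:ℝ)) ^ m * b (n - (k i + s)))
            + ∑ j ∈ (Finset.Icc 1 t).erase i, b (n - k j)) := by
      ring
    rw [key]
    have h1t : (0:ℝ) < 1 / t := by positivity
    rw [abs_mul, abs_neg, abs_of_pos h1t]
    calc (1 / (t:ℝ)) * |(b (n - k i) - (-1 : ℝ) ^ m * (1 / (t:ℝ)) ^ m * b (n - (k i + s)))
            + ∑ j ∈ (Finset.Icc 1 t).erase i, b (n - k j)|
        ≤ (1 / (t:ℝ)) * ((1 - (1 / (t:ℝ)) ^ m) * M + ((t:ℝ) - 1) * M) := by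
          apply mul_le_mul_of_nonneg_left _ h1t.le
          exact (abs_add_le _ _).trans (add_le_add hIH hsum_erase)
      _ = (1 - (1 / (t:ℝ)) ^ (m + 1)) * M := by
          field_simp
          linear_combination (M * (1 / (t:ℝ)) ^ m) * mul_one_div_cancel ht0

theorem stmt12 (t : ℕ) (ht : 2 ≤ t) (k : ℕ → ℕ)
    (hmono : ∀ i j, 1 ≤ i → i < j → j ≤ t → k i < k j)
    (hk1 : 1 ≤ k 1)
    (hgcd : Finset.gcd (Finset.Icc 1 t) k = 1)
    (heven : ∃ i, 1 ≤ i ∧ i ≤ t ∧ Even (k i))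
    (a : ℕ → ℝ)
    (hrec : ∀ n, k t ≤ n → a n = 1 - (1 / (t : ℝ)) * ∑ i ∈ Finset.Icc 1 t, a (n - k i)) :
    Tendsto a atTop (nhds (1 / 2)) := by
  have ht0 : (t : ℝ) ≠ 0 := by positivity
  have hk : ∀ i ∈ Finset.Icc 1 t, 1 ≤ k i ∧ k i ≤ k t := by
    intro i hi
    rw [Finset.mem_Icc] at hi
    constructor
    · rcases eq_or_lt_of_le hi.1 with h | h
      · rwa [← h]
      · exact hk1.trans (hmono 1 i le_rfl h (by omega)).le
    · rcases eq_or_lt_of_le hi.2 with h | h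
      · rw [h]
      · exact (hmono i t hi.1 h le_rfl).le
  set K := k t with hKdef
  have hKpos : 1 ≤ K := le_trans (hk 1 (Finset.mem_Icc.mpr ⟨le_rfl, by omega⟩)).1
    (hk 1 (Finset.mem_Icc.mpr ⟨le_rfl, by omega⟩)).2
  set b : ℕ → ℝ := fun n => a n - 1 / 2 with hbdef
  have hcard : (Finset.Icc 1 t).card = t := by rw [Nat.card_Icc]; omega
  have hrecb : ∀ n, K ≤ n → b n = -(1 / (t : ℝ)) * ∑ i ∈ Finset.Icc 1 t, b (n - k i) := by
    intro n hn
    have h := hrec n hn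
    simp only [hbdef]
    have hsum : ∑ i ∈ Finset.Icc 1 t, (a (n - k i) - 1 / 2)
        = (∑ i ∈ Finset.Icc 1 t, a (n - k i)) - (t : ℝ) * (1 / 2) := by
      rw [Finset.sum_sub_distrib, Finset.sum_const, hcard, nsmul_eq_mul]
    rw [hsum, h]
    field_simp
    ring
  -- even and odd indices
  obtain ⟨e, he1, het, heve⟩ := heven
  have hee : e ∈ Finset.Icc 1 t := Finset.mem_Icc.mpr ⟨he1, het⟩
  obtain ⟨o, ho1, hot, hodd⟩ : ∃ o, 1 ≤ o ∧ o ≤ t ∧ ¬ Even (k o) := by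
    by_contra h
    push_neg at h
    have h2 : (2 : ℕ) ∣ Finset.gcd (Finset.Icc 1 t) k := by
      refine Finset.dvd_gcd fun i hi => ?_
      rw [Finset.mem_Icc] at hi
      exact (h i hi.1 hi.2).two_dvd
    rw [hgcd] at h2
    norm_num at h2
  have hoe : o ∈ Finset.Icc 1 t := Finset.mem_Icc.mpr ⟨ho1, hot⟩
  have hko : Odd (k o) := Nat.not_even_iff_odd.mp hodd
  set m1 := k o with hm1
  set m2 := k e with hm2
  have hm1pos : 1 ≤ m1 := (hk o hoe).1
  have hm2pos : 1 ≤ m2 := (hk e hee).1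
  set W := max m1 m2 * K with hW
  have hW1 : 1 ≤ W := Nat.one_le_iff_ne_zero.mpr (by positivity)
  -- global bound
  set B := ∑ j ∈ Finset.range K, |b j| with hB
  have hB0 : 0 ≤ B := Finset.sum_nonneg fun _ _ => abs_nonneg _
  have hBb : ∀ n, |b n| ≤ B := by
    intro n
    induction n using Nat.strong_induction_on with
    | _ n IH =>
      by_cases hn : n < K
      · exact Finset.single_le_sum (f := fun j => |b j|) (fun _ _ => abs_nonneg _)
          (Finset.mem_range.mpr hn)
      · push_neg at hn
        rw [hrecb n hn, abs_mul, abs_neg, abs_of_pos (by positivity : (0:ℝ) < 1 / t)]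
        calc (1 / (t:ℝ)) * |∑ i ∈ Finset.Icc 1 t, b (n - k i)|
            ≤ (1 / (t:ℝ)) * ∑ i ∈ Finset.Icc 1 t, |b (n - k i)| := by
              exact mul_le_mul_of_nonneg_left (Finset.abs_sum_le_sum_abs _ _) (by positivity)
          _ ≤ (1 / (t:ℝ)) * ∑ i ∈ Finset.Icc 1 t, B := by
              refine mul_le_mul_of_nonneg_left (Finset.sum_le_sum fun i hi => ?_) (by positivity)
              have h1 := hk i hi
              exact IH (n - k i) (by omega)
          _ = B := by
              rw [Finset.sum_const, hcard, nsmul_eq_mul]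
              field_simp
  -- contraction constant
  have h2t : (2:ℝ) ≤ (t:ℝ) := by exact_mod_cast ht
  set q : ℝ := min ((1 / (t:ℝ)) ^ m1) ((1 / (t:ℝ)) ^ m2) with hq
  have hx0 : (0:ℝ) < 1 / (t:ℝ) := by positivity
  have hx1 : (1:ℝ) / (t:ℝ) ≤ 1 / 2 := by
    rw [div_le_div_iff₀ (by linarith) (by norm_num)]
    linarith
  have hq0 : 0 < q := lt_min (by positivity) (by positivity)
  have hq12 : q ≤ 1 / 2 := by
    have h1 : q ≤ (1 / (t:ℝ)) ^ m1 := min_le_left _ _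
    have h2 : (1 / (t:ℝ)) ^ m1 ≤ (1 / (t:ℝ)) ^ 1 := pow_le_pow_of_le_one hx0.le (by linarith) hm1pos
    simpa using h1.trans (h2.trans (by simpa using hx1))
  -- the contraction step
  have hcontr : ∀ n, W ≤ n → ∀ M : ℝ, 0 ≤ M →
      (∀ j, n - W ≤ j → j < n → |b j| ≤ M) → |b n| ≤ (1 - q) * M := by
    intro n hn M hM hb
    have hsum1 : ((List.replicate m1 e).map k).sum = m1 * m2 := by
      simp [List.map_replicate, List.sum_replicate, smul_eq_mul, hm2]
    have hsum2 : ((List.replicate m2 o).map k).sum = m1 * m2 := by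
      simp [List.map_replicate, List.sum_replicate, smul_eq_mul, Nat.mul_comm, hm1]
    have hmax1 : m1 * K ≤ W := Nat.mul_le_mul_right _ (le_max_left _ _)
    have hmax2 : m2 * K ≤ W := Nat.mul_le_mul_right _ (le_max_right _ _)
    have h1 := stmt12_expand t ht k b hk hrecb (List.replicate m1 e)
      (fun i hi => by rw [(List.mem_replicate.mp hi).2]; exact hee) n
      (by simpa using hmax1.trans hn) M hM
      (fun j hj1 hj2 => hb j (by
        simp only [List.length_replicate] at hj1
        have hh : m1 * k t ≤ W := hKdef ▸ hmax1
        omega) hj2)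
    have h2 := stmt12_expand t ht k b hk hrecb (List.replicate m2 o)
      (fun i hi => by rw [(List.mem_replicate.mp hi).2]; exact hoe) n
      (by simpa using hmax2.trans hn) M hM
      (fun j hj1 hj2 => hb j (by
        simp only [List.length_replicate] at hj1
        have hh : m2 * k t ≤ W := hKdef ▸ hmax2
        omega) hj2)
    rw [List.length_replicate, hsum1] at h1
    rw [List.length_replicate, hsum2] at h2
    rw [hko.neg_one_pow] at h1
    rw [heve.neg_one_pow] at h2
    set c := b (n - m1 * m2) with hc
    rw [abs_le] at h1 h2
    rw [abs_le]
    have hqa : q ≤ (1 / (t:ℝ)) ^ m1 := min_le_left _ _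
    have hqb : q ≤ (1 / (t:ℝ)) ^ m2 := min_le_right _ _
    have hxa : (0:ℝ) < (1 / (t:ℝ)) ^ m1 := by positivity
    have hxb : (0:ℝ) < (1 / (t:ℝ)) ^ m2 := by positivity
    clear_value b q c
    rcases le_or_gt 0 c with hcs | hcs
    · constructor
      · have p1 : 0 ≤ (1 / (t:ℝ)) ^ m2 * c := mul_nonneg hxb.le hcs
        have p2 : 0 ≤ ((1 / (t:ℝ)) ^ m2 - q) * M := mul_nonneg (by linarith) hM
        linarith [h2.1]
      · have p1 : 0 ≤ (1 / (t:ℝ)) ^ m1 * c := mul_nonneg hxa.le hcs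
        have p2 : 0 ≤ ((1 / (t:ℝ)) ^ m1 - q) * M := mul_nonneg (by linarith) hM
        linarith [h1.2]
    · constructor
      · have p1 : 0 ≤ (1 / (t:ℝ)) ^ m1 * -c := mul_nonneg hxa.le (by linarith)
        have p2 : 0 ≤ ((1 / (t:ℝ)) ^ m1 - q) * M := mul_nonneg (by linarith) hM
        linarith [h1.1]
      · have p1 : (1 / (t:ℝ)) ^ m2 * c ≤ 0 := mul_nonpos_of_nonneg_of_nonpos hxb.le hcs.le
        have p2 : 0 ≤ ((1 / (t:ℝ)) ^ m2 - q) * M := mul_nonneg (by linarith) hM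
        linarith [h2.2]
  -- geometric decay
  have hq1' : (0:ℝ) ≤ 1 - q := by linarith
  have hgeom : ∀ r n, (r + 1) * W ≤ n → |b n| ≤ (1 - q) ^ r * B := by
    intro r
    induction r with
    | zero => intro n _; simpa using hBb n
    | succ r IH =>
      intro n hn
      have h1 : (r + 1 + 1) * W = (r + 1) * W + W := by ring
      have hWn : W ≤ n := by omega
      have h2 := hcontr n hWn ((1 - q) ^ r * B) (mul_nonneg (pow_nonneg hq1' _) hB0)
        (fun j hj1 hj2 => IH j (by omega))
      calc |b n| ≤ (1 - q) * ((1 - q) ^ r * B) := h2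
        _ = (1 - q) ^ (r + 1) * B := by ring
  -- conclude
  have hb0 : Tendsto b atTop (nhds 0) := by
    rw [Metric.tendsto_atTop]
    intro ε hε
    have hlim : Tendsto (fun r : ℕ => (1 - q) ^ r * B) atTop (nhds 0) := by
      have h := tendsto_pow_atTop_nhds_zero_of_lt_one hq1' (by linarith)
      simpa using h.mul_const B
    obtain ⟨r, hr⟩ := (hlim.eventually_lt_const hε).exists
    refine ⟨(r + 1) * W, fun n hn => ?_⟩
    rw [Real.dist_eq, sub_zero]
    exact lt_of_le_of_lt (hgeom r n hn) hr
  have hfin : Tendsto (fun n => b n + 1 / 2) atTop (nhds (0 + 1 / 2)) :=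
    hb0.add_const _
  have heq : (fun n => b n + 1 / 2) = a := funext fun n => by simp [hbdef]
  rw [heq] at hfin
  norm_num at hfin
  exact hfin
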